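/- Let f_i : ℝ^{n_i} → ℝ be differentiable, α-strongly convex (α > 0), with L_i-Lipschitz gradient for i = 1,…,N; let A_i ∈ ℝ^{m×n_i} be such that the stacked matrix [A_1ᵀ;…;A_Nᵀ] has full column rank; let c ∈ ℝ^m, and let P_i be symmetric positive semi-definite. Let L := max_i L_i², D := ∑_i ‖A_iᵀ‖². Suppose (x*, λ*) satisfies the KKT conditions ∇f_i(x_i*) = A_iᵀλ* and ∑_i A_i x_i* = c. Choose s > 0 with s[ρ²D‖A_i‖² + L/N] < α/(2N) for all i, and suppose 0 < γ < 2 and ρ > 0 are such that there exist ξ_i > 0 with ∑_i ξ_i < 2 − γ and ρA_iᵀA_i + P_i − 8s(ρA_iᵀA_i + P_i)ᵀ(ρA_iᵀA_i + P_i) − (ρ/ξ_i)A_iᵀA_i positive definite for each i. Let c_A ∈ (0, 1/√(2γρs)) satisfy c_A² I_m ⪯ ∑_{i=1}^N A_iA_iᵀ, let μ_s ∈ (0,1) satisfy (ρ + 4Nsρ²D)A_iᵀA_i + P_i ⪯ μ_s(ρA_iᵀA_i + P_i + 2(α − 2Ls)I_{n_i}) for all i, and set σ := max{1 − 2γρsc_A²,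 μ_s} ∈ (0,1). Define φ(x, λ) := (1/(2γρ))‖λ − λ*‖² + (1/2)∑_{i=1}^N ‖x_i − x_i*‖²_{ρA_iᵀA_i + P_i + 2(α−2Ls)I_{n_i}}. If x_i⁺ satisfies ∇f_i(x_i⁺) = A_iᵀλ − ρA_iᵀ(A_ix_i⁺ + ∑_{j≠i}A_jx_j − c) + P_i(x_i − x_i⁺) for each i and λ⁺ = λ − γρ(∑_i A_i x_i⁺ − c), then φ(x⁺, λ⁺) ≤ σ φ(x, λ). -/

import Mathlib

open Matrix Finset RealInnerProductSpace

/-- Matrix-vector multiplication `A x` as a map between Euclidean spaces. -/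
noncomputable def mv {a b : ℕ} (A : Matrix (Fin a) (Fin b) ℝ)
    (x : EuclideanSpace ℝ (Fin b)) : EuclideanSpace ℝ (Fin a) :=
  Matrix.toEuclideanLin A x

/-- Quadratic form `xᵀ M x`. -/
noncomputable def qf {a : ℕ} (M : Matrix (Fin a) (Fin a) ℝ)
    (x : EuclideanSpace ℝ (Fin a)) : ℝ := ⟪x, mv M x⟫

/-- Operator norm of a matrix, viewed as a linear map between Euclidean spaces. -/
noncomputable def opN {a b : ℕ} (A : Matrix (Fin a) (Fin b) ℝ) : ℝ :=
  ‖(LinearMap.toContinuousLinearMap (Matrix.toEuclideanLin A))‖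

lemma mv_apply {a b : ℕ} (A : Matrix (Fin a) (Fin b) ℝ) (x : EuclideanSpace ℝ (Fin b)) (j : Fin a) :
    mv A x j = ∑ k, A j k * x k := by
  simp [mv, Matrix.toEuclideanLin, Matrix.toLin'_apply, Matrix.mulVec, dotProduct]

lemma inner_eu {k : ℕ} (x y : EuclideanSpace ℝ (Fin k)) : ⟪x, y⟫ = ∑ i, x i * y i := by
  simp [PiLp.inner_apply]
  exact Finset.sum_congr rfl fun _ _ => mul_comm _ _

lemma mv_add_right {a b : ℕ} (A : Matrix (Fin a) (Fin b) ℝ) (x y : EuclideanSpace ℝ (Fin b)) :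
    mv A (x + y) = mv A x + mv A y := map_add _ _ _

lemma mv_sub_right {a b : ℕ} (A : Matrix (Fin a) (Fin b) ℝ) (x y : EuclideanSpace ℝ (Fin b)) :
    mv A (x - y) = mv A x - mv A y := map_sub _ _ _

lemma mv_smul_right {a b : ℕ} (A : Matrix (Fin a) (Fin b) ℝ) (r : ℝ) (x : EuclideanSpace ℝ (Fin b)) :
    mv A (r • x) = r • mv A x := map_smul _ _ _

lemma mv_add_mat {a b : ℕ} (A B : Matrix (Fin a) (Fin b) ℝ) (x : EuclideanSpace ℝ (Fin b)) :
    mv (A + B) x = mv A x + mv B x := by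
  ext j; simp [mv_apply, add_mul, Finset.sum_add_distrib]

lemma mv_sub_mat {a b : ℕ} (A B : Matrix (Fin a) (Fin b) ℝ) (x : EuclideanSpace ℝ (Fin b)) :
    mv (A - B) x = mv A x - mv B x := by
  ext j; simp [mv_apply, sub_mul, Finset.sum_sub_distrib]

lemma mv_smul_mat {a b : ℕ} (r : ℝ) (A : Matrix (Fin a) (Fin b) ℝ) (x : EuclideanSpace ℝ (Fin b)) :
    mv (r • A) x = r • mv A x := by
  ext j; simp [mv_apply, Finset.mul_sum, mul_assoc]

lemma mv_one {a : ℕ} (x : EuclideanSpace ℝ (Fin a)) :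
    mv (1 : Matrix (Fin a) (Fin a) ℝ) x = x := by
  ext j; simp [mv_apply, Matrix.one_apply]

lemma mv_mul_mat {a b c : ℕ} (A : Matrix (Fin a) (Fin b) ℝ) (B : Matrix (Fin b) (Fin c) ℝ)
    (x : EuclideanSpace ℝ (Fin c)) : mv (A * B) x = mv A (mv B x) := by
  ext j
  simp only [mv_apply, Matrix.mul_apply, Finset.sum_mul, Finset.mul_sum]
  rw [Finset.sum_comm]
  simp [mul_assoc]

lemma inner_mv_transpose {a b : ℕ} (A : Matrix (Fin a) (Fin b) ℝ)
    (x : EuclideanSpace ℝ (Fin b)) (y : EuclideanSpace ℝ (Fin a)) :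
    ⟪x, mv Aᵀ y⟫ = ⟪mv A x, y⟫ := by
  simp only [inner_eu, mv_apply, Matrix.transpose_apply, Finset.mul_sum, Finset.sum_mul]
  rw [Finset.sum_comm]
  congr 1; ext j; congr 1; ext k; ring

lemma qf_nonneg_of_psd {a : ℕ} {M : Matrix (Fin a) (Fin a) ℝ} (h : M.PosSemidef)
    (x : EuclideanSpace ℝ (Fin a)) : 0 ≤ qf M x := by
  have := h.dotProduct_mulVec_nonneg x.ofLp
  simp [dotProduct, Matrix.mulVec] at this
  rw [qf, inner_eu]
  simp only [mv_apply]
  convert this using 2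

lemma norm_mv_le {a b : ℕ} (A : Matrix (Fin a) (Fin b) ℝ) (x : EuclideanSpace ℝ (Fin b)) :
    ‖mv A x‖ ≤ opN A * ‖x‖ :=
  (LinearMap.toContinuousLinearMap (Matrix.toEuclideanLin A)).le_opNorm x

lemma opN_nonneg {a b : ℕ} (A : Matrix (Fin a) (Fin b) ℝ) : 0 ≤ opN A := norm_nonneg _

-- qf lemmas
lemma qf_add_mat {a : ℕ} (M N' : Matrix (Fin a) (Fin a) ℝ) (x : EuclideanSpace ℝ (Fin a)) :
    qf (M + N') x = qf M x + qf N' x := by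
  simp [qf, mv_add_mat, inner_add_right]

lemma qf_sub_mat {a : ℕ} (M N' : Matrix (Fin a) (Fin a) ℝ) (x : EuclideanSpace ℝ (Fin a)) :
    qf (M - N') x = qf M x - qf N' x := by
  simp [qf, mv_sub_mat, inner_sub_right]

lemma qf_smul_mat {a : ℕ} (r : ℝ) (M : Matrix (Fin a) (Fin a) ℝ) (x : EuclideanSpace ℝ (Fin a)) :
    qf (r • M) x = r * qf M x := by
  simp only [qf, mv_smul_mat]; exact real_inner_smul_right _ _ _

lemma qf_one {a : ℕ} (x : EuclideanSpace ℝ (Fin a)) :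
    qf (1 : Matrix (Fin a) (Fin a) ℝ) x = ‖x‖ ^ 2 := by
  simp only [qf, mv_one]; exact real_inner_self_eq_norm_sq x

lemma qf_transpose_mul {a b : ℕ} (M : Matrix (Fin a) (Fin b) ℝ) (x : EuclideanSpace ℝ (Fin b)) :
    qf (Mᵀ * M) x = ‖mv M x‖ ^ 2 := by
  rw [qf, mv_mul_mat, inner_mv_transpose, real_inner_self_eq_norm_sq]

lemma qf_mul_transpose {a b : ℕ} (M : Matrix (Fin a) (Fin b) ℝ) (x : EuclideanSpace ℝ (Fin a)) :
    qf (M * Mᵀ) x = ‖mv Mᵀ x‖ ^ 2 := by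
  have := qf_transpose_mul Mᵀ x
  rwa [Matrix.transpose_transpose] at this

lemma inner_mv_symm {a : ℕ} {M : Matrix (Fin a) (Fin a) ℝ} (h : Mᵀ = M)
    (x y : EuclideanSpace ℝ (Fin a)) : ⟪x, mv M y⟫ = ⟪y, mv M x⟫ := by
  conv_lhs => rw [← h]
  rw [inner_mv_transpose, real_inner_comm]

lemma qf_add_vec {a : ℕ} {M : Matrix (Fin a) (Fin a) ℝ} (h : Mᵀ = M)
    (x y : EuclideanSpace ℝ (Fin a)) :
    qf M (x + y) = qf M x + 2 * ⟪x, mv M y⟫ + qf M y := by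
  simp only [qf, mv_add_right, inner_add_left, inner_add_right]
  rw [inner_mv_symm h y x]
  ring

lemma qf_sum_mat {a : ℕ} {ι : Type*} (t : Finset ι) (M : ι → Matrix (Fin a) (Fin a) ℝ)
    (x : EuclideanSpace ℝ (Fin a)) : qf (∑ i ∈ t, M i) x = ∑ i ∈ t, qf (M i) x := by
  classical
  induction t using Finset.induction with
  | empty => simp [qf, inner_eu, mv_apply]
  | insert a' s' hni ih => rw [Finset.sum_insert hni, qf_add_mat, ih, Finset.sum_insert hni]

set_option maxHeartbeats 1000000 in
/-- the one-step contraction of Theorem 2.1: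
`φ(x⁺, λ⁺) ≤ σ φ(x, λ)` with `σ = max {1 - 2γρs c_A², μ_s}`. -/
theorem stmt12 {N m : ℕ} (hN : 0 < N) (n : Fin N → ℕ)
    (f : (i : Fin N) → EuclideanSpace ℝ (Fin (n i)) → ℝ)
    (g : (i : Fin N) → EuclideanSpace ℝ (Fin (n i)) → EuclideanSpace ℝ (Fin (n i)))
    (hdiff : ∀ i x, HasGradientAt (f i) (g i x) x)
    (α : ℝ) (hα : 0 < α)
    (hsc : ∀ i x y, f i y ≥ f i x + ⟪y - x, g i x⟫ + α * ‖x - y‖ ^ 2)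
    (Li : Fin N → ℝ)
    (hlip : ∀ i x y, ‖g i x - g i y‖ ≤ Li i * ‖x - y‖)
    (A : (i : Fin N) → Matrix (Fin m) (Fin (n i)) ℝ)
    (hrank : ∀ μ : EuclideanSpace ℝ (Fin m), (∀ i, mv (A i)ᵀ μ = 0) → μ = 0)
    (c : EuclideanSpace ℝ (Fin m))
    (P : (i : Fin N) → Matrix (Fin (n i)) (Fin (n i)) ℝ)
    (hP : ∀ i, (P i).PosSemidef)
    (L D : ℝ)
    (hL : L = Finset.univ.sup' ⟨⟨0, hN⟩, Finset.mem_univ _⟩ (fun i => (Li i) ^ 2))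
    (hD : D = ∑ i, opN (A i)ᵀ ^ 2)
    (xstar : (i : Fin N) → EuclideanSpace ℝ (Fin (n i)))
    (lamstar : EuclideanSpace ℝ (Fin m))
    (hkkt1 : ∀ i, g i (xstar i) = mv (A i)ᵀ lamstar)
    (hkkt2 : ∑ i, mv (A i) (xstar i) = c)
    (ρ γ s : ℝ) (hρ : 0 < ρ) (hγ0 : 0 < γ) (hγ2 : γ < 2) (hs : 0 < s)
    (hscond : ∀ i, s * (ρ ^ 2 * D * opN (A i) ^ 2 + L / N) < α / (2 * N))
    (ξ : Fin N → ℝ) (hξ : ∀ i, 0 < ξ i) (hξsum : ∑ i, ξ i < 2 - γ)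
    (hmat : ∀ i, (ρ • ((A i)ᵀ * A i) + P i
        - (8 * s) • ((ρ • ((A i)ᵀ * A i) + P i)ᵀ * (ρ • ((A i)ᵀ * A i) + P i))
        - (ρ / ξ i) • ((A i)ᵀ * A i)).PosDef)
    (cA : ℝ) (hcA0 : 0 < cA) (hcA1 : cA < 1 / Real.sqrt (2 * γ * ρ * s))
    (hcAmat : ((∑ i, A i * (A i)ᵀ) - cA ^ 2 • (1 : Matrix (Fin m) (Fin m) ℝ)).PosSemidef)
    (μs : ℝ) (hμs0 : 0 < μs) (hμs1 : μs < 1)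
    (hμsmat : ∀ i, (μs • (ρ • ((A i)ᵀ * A i) + P i
          + (2 * (α - 2 * L * s)) • (1 : Matrix (Fin (n i)) (Fin (n i)) ℝ))
        - ((ρ + 4 * N * s * ρ ^ 2 * D) • ((A i)ᵀ * A i) + P i)).PosSemidef)
    (x xp : (i : Fin N) → EuclideanSpace ℝ (Fin (n i)))
    (lam lamp : EuclideanSpace ℝ (Fin m))
    (hopt : ∀ i, g i (xp i) = mv (A i)ᵀ lam
        - ρ • mv (A i)ᵀ (mv (A i) (xp i) + (∑ j ∈ Finset.univ.erase i, mv (A j) (x j)) - c)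
        + mv (P i) (x i - xp i))
    (hdual : lamp = lam - (γ * ρ) • ((∑ i, mv (A i) (xp i)) - c)) :
    (1 / (2 * γ * ρ)) * ‖lamp - lamstar‖ ^ 2
        + (1 / 2) * ∑ i, qf (ρ • ((A i)ᵀ * A i) + P i
            + (2 * (α - 2 * L * s)) • (1 : Matrix (Fin (n i)) (Fin (n i)) ℝ)) (xp i - xstar i)
      ≤ max (1 - 2 * γ * ρ * s * cA ^ 2) μs *
        ((1 / (2 * γ * ρ)) * ‖lam - lamstar‖ ^ 2
          + (1 / 2) * ∑ i, qf (ρ • ((A i)ᵀ * A i) + P i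
              + (2 * (α - 2 * L * s)) • (1 : Matrix (Fin (n i)) (Fin (n i)) ℝ)) (x i - xstar i)) := by
  classical
  have i0 : Fin N := ⟨0, hN⟩
  have hNR : (0:ℝ) < (N:ℝ) := by exact_mod_cast hN
  have hD0 : 0 ≤ D := by
    rw [hD]; exact Finset.sum_nonneg fun i _ => sq_nonneg _
  have hLi2 : ∀ i, Li i ^ 2 ≤ L := by
    intro i; rw [hL]; exact Finset.le_sup' (fun i => Li i ^ 2) (Finset.mem_univ i)
  have hL0 : 0 ≤ L := le_trans (sq_nonneg _) (hLi2 i0)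
  have hsLα : 2 * (L * s) < α := by
    have h := hscond i0
    have h1 : s * (L / N) ≤ s * (ρ ^ 2 * D * opN (A i0) ^ 2 + L / N) := by
      have : 0 ≤ ρ ^ 2 * D * opN (A i0) ^ 2 := by positivity
      nlinarith
    have h2 : s * (L / N) < α / (2 * N) := lt_of_le_of_lt h1 h
    have h3 : s * (L / N) * (2 * N) < α / (2 * N) * (2 * N) :=
      mul_lt_mul_of_pos_right h2 (by positivity)
    have e2 : s * (L / N) * (2 * N) = 2 * (L * s) := by field_simp
    have e3 : α / (2 * N) * (2 * N) = α := by field_simp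
    linarith
  have hαs : 0 < α - 2 * L * s := by nlinarith
  -- vectors
  set rp : EuclideanSpace ℝ (Fin m) := ∑ i, mv (A i) (xp i - xstar i) with hrpdef
  set rr : EuclideanSpace ℝ (Fin m) := ∑ i, mv (A i) (x i - xstar i) with hrrdef
  set w : EuclideanSpace ℝ (Fin m) := ∑ i, mv (A i) (x i - xp i) with hwdef
  have hrp : (∑ i, mv (A i) (xp i)) - c = rp := by
    rw [hrpdef, ← hkkt2]
    simp only [mv_sub_right, Finset.sum_sub_distrib]
  have hrr : (∑ i, mv (A i) (x i)) - c = rr := by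
    rw [hrrdef, ← hkkt2]
    simp only [mv_sub_right, Finset.sum_sub_distrib]
  have hw : rr = rp + w := by
    rw [hrrdef, hrpdef, hwdef, ← Finset.sum_add_distrib]
    refine Finset.sum_congr rfl fun i _ => ?_
    rw [← mv_add_right]
    congr 1
    abel
  have hmup : lamp - lamstar = (lam - lamstar) - (γ * ρ) • rp := by
    rw [hdual, hrp]
    abel
  have hF2a : ∀ i, mv (A i)ᵀ (lam - lamstar)
      = (g i (xp i) - g i (xstar i)) + ρ • mv (A i)ᵀ rr
        - mv (ρ • ((A i)ᵀ * A i) + P i) (x i - xp i) := by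
    intro i
    have e : ∑ j ∈ Finset.univ.erase i, mv (A j) (x j)
        = (∑ j, mv (A j) (x j)) - mv (A i) (x i) :=
      eq_sub_of_add_eq (Finset.sum_erase_add _ _ (Finset.mem_univ i))
    have h1 : mv (A i) (xp i) + (∑ j ∈ Finset.univ.erase i, mv (A j) (x j)) - c
        = rr - mv (A i) (x i - xp i) := by
      rw [e, ← hrr, mv_sub_right]
      abel
    rw [hopt i, hkkt1 i, h1]
    simp only [mv_sub_right, smul_sub, mv_add_mat, mv_smul_mat, mv_mul_mat]
    abel
  have hF2b : ∀ i, g i (xp i) - g i (xstar i)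
      = mv (A i)ᵀ (lamp - lamstar) + ((γ - 1) * ρ) • mv (A i)ᵀ rp - ρ • mv (A i)ᵀ w
        + mv (ρ • ((A i)ᵀ * A i) + P i) (x i - xp i) := by
    intro i
    have hlm : lam - lamstar = (lamp - lamstar) + (γ * ρ) • rp := by
      rw [hmup]; abel
    have h2 := hF2a i
    rw [hlm, hw] at h2
    simp only [mv_add_right, mv_smul_right, smul_add] at h2 ⊢
    have h6 := eq_sub_of_add_eq h2
    rw [h6]
    match_scalars <;> ring
  -- scalar sums
  set Sv := ∑ i, ‖xp i - xstar i‖ ^ 2 with hSvdef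
  set Su := ∑ i, ‖x i - xstar i‖ ^ 2 with hSudef
  set SMu := ∑ i, qf (ρ • ((A i)ᵀ * A i) + P i) (x i - xstar i) with hSMudef
  set SMv := ∑ i, qf (ρ • ((A i)ᵀ * A i) + P i) (xp i - xstar i) with hSMvdef
  set SMd := ∑ i, qf (ρ • ((A i)ᵀ * A i) + P i) (x i - xp i) with hSMddef
  set SMd2 := ∑ i, ‖mv (ρ • ((A i)ᵀ * A i) + P i) (x i - xp i)‖ ^ 2 with hSMd2def
  set SAd := ∑ i, (ρ / (2 * ξ i)) * ‖mv (A i) (x i - xp i)‖ ^ 2 with hSAddef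
  set SAu := ∑ i, ‖mv (A i) (x i - xstar i)‖ ^ 2 with hSAudef
  set SGu := ∑ i, qf (ρ • ((A i)ᵀ * A i) + P i
      + (2 * (α - 2 * L * s)) • (1 : Matrix (Fin (n i)) (Fin (n i)) ℝ)) (x i - xstar i) with hSGudef
  set SGv := ∑ i, qf (ρ • ((A i)ᵀ * A i) + P i
      + (2 * (α - 2 * L * s)) • (1 : Matrix (Fin (n i)) (Fin (n i)) ℝ)) (xp i - xstar i) with hSGvdef
  have hMdec : ∀ i (z : EuclideanSpace ℝ (Fin (n i))),
      qf (ρ • ((A i)ᵀ * A i) + P i) z = ρ * ‖mv (A i) z‖ ^ 2 + qf (P i) z := by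
    intro i z
    rw [qf_add_mat, qf_smul_mat, qf_transpose_mul]
  have hIa : 2 * α * Sv + (ρ * (2 - γ - (∑ i, ξ i)) / 2) * ‖rp‖ ^ 2 + (1/2) * SMd - SAd
      ≤ (1 / (2 * γ * ρ)) * ‖lam - lamstar‖ ^ 2 - (1 / (2 * γ * ρ)) * ‖lamp - lamstar‖ ^ 2
        + (1/2) * SMu - (1/2) * SMv := by
    -- monotonicity
    have hmono : ∀ i, 2 * α * ‖xp i - xstar i‖ ^ 2
        ≤ ⟪xp i - xstar i, g i (xp i) - g i (xstar i)⟫ := by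
      intro i
      have h1 := hsc i (xp i) (xstar i)
      have h2 := hsc i (xstar i) (xp i)
      have e1 : ⟪xstar i - xp i, g i (xp i)⟫ = -⟪xp i - xstar i, g i (xp i)⟫ := by
        rw [show xstar i - xp i = -(xp i - xstar i) from by abel, inner_neg_left]
      have e2 : ‖xstar i - xp i‖ = ‖xp i - xstar i‖ := norm_sub_rev _ _
      rw [e1] at h1
      rw [e2] at h2
      rw [inner_sub_right]
      linarith only [h1, h2]
    have hmonos : 2 * α * Sv ≤ ∑ i, ⟪xp i - xstar i, g i (xp i) - g i (xstar i)⟫ := by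
      rw [hSvdef, Finset.mul_sum]
      exact Finset.sum_le_sum fun i _ => hmono i
    -- sum identity
    have hsum1 : ∑ i, ⟪xp i - xstar i, g i (xp i) - g i (xstar i)⟫
        = ⟪rp, lamp - lamstar⟫ + ((γ - 1) * ρ) * ‖rp‖ ^ 2 - ρ * ⟪rp, w⟫
          + ∑ i, ⟪xp i - xstar i, mv (ρ • ((A i)ᵀ * A i) + P i) (x i - xp i)⟫ := by
      have per : ∀ i, ⟪xp i - xstar i, g i (xp i) - g i (xstar i)⟫
          = ⟪mv (A i) (xp i - xstar i), lamp - lamstar⟫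
            + ((γ - 1) * ρ) * ⟪mv (A i) (xp i - xstar i), rp⟫
            - ρ * ⟪mv (A i) (xp i - xstar i), w⟫
            + ⟪xp i - xstar i, mv (ρ • ((A i)ᵀ * A i) + P i) (x i - xp i)⟫ := by
        intro i
        rw [hF2b i]
        simp only [inner_add_right, inner_sub_right, real_inner_smul_right, inner_mv_transpose]
      rw [Finset.sum_congr rfl fun i _ => per i, Finset.sum_add_distrib, Finset.sum_sub_distrib,
        Finset.sum_add_distrib, ← Finset.mul_sum, ← Finset.mul_sum, ← sum_inner, ← sum_inner,
        ← sum_inner, ← hrpdef, real_inner_self_eq_norm_sq]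
    -- dual expansion
    have hF5 : (1 / (2 * γ * ρ)) * (‖lam - lamstar‖ ^ 2 - ‖lamp - lamstar‖ ^ 2)
        = ⟪rp, lamp - lamstar⟫ + (γ * ρ / 2) * ‖rp‖ ^ 2 := by
      have hlm : lam - lamstar = (lamp - lamstar) + (γ * ρ) • rp := by
        rw [hmup]; abel
      have hnorm : ‖lam - lamstar‖ ^ 2 = ‖lamp - lamstar‖ ^ 2
          + 2 * ((γ * ρ) * ⟪lamp - lamstar, rp⟫) + (γ * ρ) ^ 2 * ‖rp‖ ^ 2 := by
        rw [hlm, norm_add_sq_real, real_inner_smul_right, norm_smul, Real.norm_eq_abs,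
          mul_pow, sq_abs]
      rw [real_inner_comm (lamp - lamstar) rp, hnorm]
      have hne : γ * ρ ≠ 0 := by positivity
      field_simp
      ring
    -- quadratic form expansion
    have hF6 : ∀ i, ⟪xp i - xstar i, mv (ρ • ((A i)ᵀ * A i) + P i) (x i - xp i)⟫
        = (1/2) * (qf (ρ • ((A i)ᵀ * A i) + P i) (x i - xstar i)
            - qf (ρ • ((A i)ᵀ * A i) + P i) (xp i - xstar i)
            - qf (ρ • ((A i)ᵀ * A i) + P i) (x i - xp i)) := by
      intro i
      have hPs : (P i)ᵀ = P i := by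
        ext j k
        have := congrFun (congrFun (hP i).1 j) k
        simpa [Matrix.conjTranspose_apply] using this
      have hsym : (ρ • ((A i)ᵀ * A i) + P i)ᵀ = ρ • ((A i)ᵀ * A i) + P i := by
        rw [Matrix.transpose_add, Matrix.transpose_smul, Matrix.transpose_mul,
          Matrix.transpose_transpose, hPs]
      have hexp := qf_add_vec hsym (xp i - xstar i) (x i - xp i)
      rw [show (xp i - xstar i) + (x i - xp i) = x i - xstar i from by abel] at hexp
      linarith only [hexp]
    have hF6s : ∑ i, ⟪xp i - xstar i, mv (ρ • ((A i)ᵀ * A i) + P i) (x i - xp i)⟫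
        = (1/2) * (SMu - SMv - SMd) := by
      rw [hSMudef, hSMvdef, hSMddef, Finset.sum_congr rfl fun i _ => hF6 i,
        ← Finset.mul_sum, Finset.sum_sub_distrib, Finset.sum_sub_distrib]
    -- Young
    have hF7 : -(ρ * ⟪rp, w⟫) ≤ (∑ i, ξ i) * ((ρ / 2) * ‖rp‖ ^ 2) + SAd := by
      have hwin : ρ * ⟪rp, w⟫ = ∑ i, ρ * ⟪rp, mv (A i) (x i - xp i)⟫ := by
        rw [hwdef, inner_sum, Finset.mul_sum]
      have per : ∀ i, -(ρ * ⟪rp, mv (A i) (x i - xp i)⟫)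
          ≤ ξ i * ((ρ / 2) * ‖rp‖ ^ 2) + (ρ / (2 * ξ i)) * ‖mv (A i) (x i - xp i)‖ ^ 2 := by
        intro i
        have hab : -⟪rp, mv (A i) (x i - xp i)⟫ ≤ ‖rp‖ * ‖mv (A i) (x i - xp i)‖ :=
          le_trans (neg_le_abs _) (abs_real_inner_le_norm _ _)
        have hab2 : -(ρ * ⟪rp, mv (A i) (x i - xp i)⟫) ≤ ρ * (‖rp‖ * ‖mv (A i) (x i - xp i)‖) := by
          have := mul_le_mul_of_nonneg_left hab hρ.le
          linarith only [this]
        have hkey : ξ i * ((ρ / 2) * ‖rp‖ ^ 2) + (ρ / (2 * ξ i)) * ‖mv (A i) (x i - xp i)‖ ^ 2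
            - ρ * (‖rp‖ * ‖mv (A i) (x i - xp i)‖)
            = (ρ / (2 * ξ i)) * (ξ i * ‖rp‖ - ‖mv (A i) (x i - xp i)‖) ^ 2 := by
          have hξi := (hξ i).ne'
          field_simp
          ring
        have hsq : 0 ≤ (ρ / (2 * ξ i)) * (ξ i * ‖rp‖ - ‖mv (A i) (x i - xp i)‖) ^ 2 := by
          have := (hξ i)
          positivity
        linarith only [hab2, hkey, hsq]
      calc -(ρ * ⟪rp, w⟫) = ∑ i, -(ρ * ⟪rp, mv (A i) (x i - xp i)⟫) := by
            rw [Finset.sum_neg_distrib, ← hwin]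
        _ ≤ ∑ i, (ξ i * ((ρ / 2) * ‖rp‖ ^ 2) + (ρ / (2 * ξ i)) * ‖mv (A i) (x i - xp i)‖ ^ 2) :=
            Finset.sum_le_sum fun i _ => per i
        _ = (∑ i, ξ i) * ((ρ / 2) * ‖rp‖ ^ 2) + SAd := by
            rw [Finset.sum_add_distrib, ← Finset.sum_mul, hSAddef]
    linarith only [hmonos, hsum1, hF5, hF6s, hF7, hξsum]
  have hII : s * cA ^ 2 * ‖lam - lamstar‖ ^ 2
      ≤ 4 * (s * L) * Sv + 2 * (N:ℝ) * s * ρ ^ 2 * D * SAu + 4 * s * SMd2 := by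
    have hcA2 : cA ^ 2 * ‖lam - lamstar‖ ^ 2 ≤ ∑ i, ‖mv (A i)ᵀ (lam - lamstar)‖ ^ 2 := by
      have h0 := qf_nonneg_of_psd hcAmat (lam - lamstar)
      rw [qf_sub_mat, qf_smul_mat, qf_one, qf_sum_mat] at h0
      have e : ∑ i, qf (A i * (A i)ᵀ) (lam - lamstar)
          = ∑ i, ‖mv (A i)ᵀ (lam - lamstar)‖ ^ 2 :=
        Finset.sum_congr rfl fun i _ => qf_mul_transpose (A i) _
      rw [e] at h0
      linarith only [h0]
    have hrrN : ‖rr‖ ^ 2 ≤ (N:ℝ) * SAu := by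
      have h1 : ‖rr‖ ≤ ∑ i, ‖mv (A i) (x i - xstar i)‖ := by
        rw [hrrdef]; exact norm_sum_le _ _
      have h2 : ‖rr‖ ^ 2 ≤ (∑ i, ‖mv (A i) (x i - xstar i)‖) ^ 2 :=
        pow_le_pow_left₀ (norm_nonneg _) h1 2
      have h3 := sq_sum_le_card_mul_sum_sq (s := (Finset.univ : Finset (Fin N)))
          (f := fun i => ‖mv (A i) (x i - xstar i)‖)
      simp only [Finset.card_univ, Fintype.card_fin] at h3
      rw [hSAudef]
      calc ‖rr‖ ^ 2 ≤ _ := h2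
        _ ≤ _ := h3
    have per : ∀ i, ‖mv (A i)ᵀ (lam - lamstar)‖ ^ 2
        ≤ 4 * L * ‖xp i - xstar i‖ ^ 2 + (2 * ρ ^ 2 * ‖rr‖ ^ 2) * opN (A i)ᵀ ^ 2
          + 4 * ‖mv (ρ • ((A i)ᵀ * A i) + P i) (x i - xp i)‖ ^ 2 := by
      intro i
      have na := hlip i (xp i) (xstar i)
      have hb : ‖ρ • mv (A i)ᵀ rr‖ ≤ ρ * (opN (A i)ᵀ * ‖rr‖) := by
        rw [norm_smul, Real.norm_eq_abs, abs_of_pos hρ]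
        exact mul_le_mul_of_nonneg_left (norm_mv_le _ _) hρ.le
      have htri : ‖mv (A i)ᵀ (lam - lamstar)‖
          ≤ ‖g i (xp i) - g i (xstar i)‖ + ‖ρ • mv (A i)ᵀ rr‖
            + ‖mv (ρ • ((A i)ᵀ * A i) + P i) (x i - xp i)‖ := by
        rw [hF2a i]
        exact le_trans (norm_sub_le _ _) (add_le_add (norm_add_le _ _) le_rfl)
      have sx : ‖g i (xp i) - g i (xstar i)‖ ^ 2 ≤ L * ‖xp i - xstar i‖ ^ 2 := by
        have h5 : Li i ^ 2 * ‖xp i - xstar i‖ ^ 2 ≤ L * ‖xp i - xstar i‖ ^ 2 :=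
          mul_le_mul_of_nonneg_right (hLi2 i) (sq_nonneg _)
        nlinarith only [na, norm_nonneg (g i (xp i) - g i (xstar i)), h5]
      have sy : ‖ρ • mv (A i)ᵀ rr‖ ^ 2 ≤ ρ ^ 2 * ‖rr‖ ^ 2 * opN (A i)ᵀ ^ 2 := by
        nlinarith only [hb, norm_nonneg (ρ • mv (A i)ᵀ rr)]
      have s424 : (‖g i (xp i) - g i (xstar i)‖ + ‖ρ • mv (A i)ᵀ rr‖
            + ‖mv (ρ • ((A i)ᵀ * A i) + P i) (x i - xp i)‖) ^ 2
          ≤ 4 * ‖g i (xp i) - g i (xstar i)‖ ^ 2 + 2 * ‖ρ • mv (A i)ᵀ rr‖ ^ 2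
            + 4 * ‖mv (ρ • ((A i)ᵀ * A i) + P i) (x i - xp i)‖ ^ 2 := by
        nlinarith only [sq_nonneg (‖g i (xp i) - g i (xstar i)‖
            - ‖mv (ρ • ((A i)ᵀ * A i) + P i) (x i - xp i)‖),
          sq_nonneg (2 * ‖g i (xp i) - g i (xstar i)‖ - ‖ρ • mv (A i)ᵀ rr‖),
          sq_nonneg (2 * ‖mv (ρ • ((A i)ᵀ * A i) + P i) (x i - xp i)‖ - ‖ρ • mv (A i)ᵀ rr‖)]
      have sX : ‖mv (A i)ᵀ (lam - lamstar)‖ ^ 2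
          ≤ (‖g i (xp i) - g i (xstar i)‖ + ‖ρ • mv (A i)ᵀ rr‖
            + ‖mv (ρ • ((A i)ᵀ * A i) + P i) (x i - xp i)‖) ^ 2 := by
        nlinarith only [htri, norm_nonneg (mv (A i)ᵀ (lam - lamstar))]
      linarith only [sX, s424, sx, sy]
    have hsum : ∑ i, ‖mv (A i)ᵀ (lam - lamstar)‖ ^ 2
        ≤ 4 * L * Sv + (2 * ρ ^ 2 * ‖rr‖ ^ 2) * D + 4 * SMd2 := by
      rw [hSvdef, hSMd2def, hD, Finset.mul_sum, Finset.mul_sum, Finset.mul_sum,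
        ← Finset.sum_add_distrib, ← Finset.sum_add_distrib]
      exact Finset.sum_le_sum fun i _ => per i
    have t1 : s * (cA ^ 2 * ‖lam - lamstar‖ ^ 2)
        ≤ s * (4 * L * Sv + (2 * ρ ^ 2 * ‖rr‖ ^ 2) * D + 4 * SMd2) :=
      mul_le_mul_of_nonneg_left (le_trans hcA2 hsum) hs.le
    have t2 : (2 * s * ρ ^ 2 * D) * ‖rr‖ ^ 2 ≤ (2 * s * ρ ^ 2 * D) * ((N:ℝ) * SAu) :=
      mul_le_mul_of_nonneg_left hrrN (by positivity)
    nlinarith only [t1, t2]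
  have hIII : 4 * s * SMd2 ≤ (1/2) * SMd - SAd := by
    have per : ∀ i, 4 * s * ‖mv (ρ • ((A i)ᵀ * A i) + P i) (x i - xp i)‖ ^ 2
        ≤ (1/2) * qf (ρ • ((A i)ᵀ * A i) + P i) (x i - xp i)
          - (ρ / (2 * ξ i)) * ‖mv (A i) (x i - xp i)‖ ^ 2 := by
      intro i
      have h0 := qf_nonneg_of_psd (hmat i).posSemidef (x i - xp i)
      rw [qf_sub_mat, qf_sub_mat, qf_smul_mat, qf_smul_mat, qf_transpose_mul,
        qf_transpose_mul] at h0
      have e : (ρ / (2 * ξ i)) * ‖mv (A i) (x i - xp i)‖ ^ 2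
          = ((ρ / ξ i) * ‖mv (A i) (x i - xp i)‖ ^ 2) / 2 := by ring
      rw [e]
      linarith
    rw [hSMd2def, hSMddef, hSAddef, Finset.mul_sum, Finset.mul_sum, ← Finset.sum_sub_distrib]
    exact Finset.sum_le_sum fun i _ => per i
  have hIV : SMu + 4 * (N:ℝ) * s * ρ ^ 2 * D * SAu ≤ μs * SGu := by
    have per : ∀ i, qf (ρ • ((A i)ᵀ * A i) + P i) (x i - xstar i)
        + 4 * (N:ℝ) * s * ρ ^ 2 * D * ‖mv (A i) (x i - xstar i)‖ ^ 2
        ≤ μs * qf (ρ • ((A i)ᵀ * A i) + P i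
            + (2 * (α - 2 * L * s)) • (1 : Matrix (Fin (n i)) (Fin (n i)) ℝ)) (x i - xstar i) := by
      intro i
      have h0 := qf_nonneg_of_psd (hμsmat i) (x i - xstar i)
      rw [qf_sub_mat, qf_smul_mat, qf_add_mat ((ρ + 4 * N * s * ρ ^ 2 * D) • ((A i)ᵀ * A i)),
        qf_smul_mat, qf_transpose_mul] at h0
      rw [hMdec i]
      nlinarith [sq_nonneg ‖mv (A i) (x i - xstar i)‖]
    rw [hSMudef, hSAudef, hSGudef, Finset.mul_sum, Finset.mul_sum, ← Finset.sum_add_distrib]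
    exact Finset.sum_le_sum fun i _ => per i
  have hGdec : ∀ (z : (i : Fin N) → EuclideanSpace ℝ (Fin (n i))),
      ∑ i, qf (ρ • ((A i)ᵀ * A i) + P i
        + (2 * (α - 2 * L * s)) • (1 : Matrix (Fin (n i)) (Fin (n i)) ℝ)) (z i)
      = (∑ i, qf (ρ • ((A i)ᵀ * A i) + P i) (z i)) + 2 * (α - 2 * L * s) * ∑ i, ‖z i‖ ^ 2 := by
    intro z
    rw [Finset.mul_sum, ← Finset.sum_add_distrib]
    refine Finset.sum_congr rfl fun i _ => ?_
    rw [qf_add_mat, qf_smul_mat, qf_one]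
  have hGu : SGu = SMu + 2 * (α - 2 * L * s) * Su := by
    rw [hSGudef, hSMudef, hSudef]; exact hGdec (fun i => x i - xstar i)
  have hGv : SGv = SMv + 2 * (α - 2 * L * s) * Sv := by
    rw [hSGvdef, hSMvdef, hSvdef]; exact hGdec (fun i => xp i - xstar i)
  have hSv0 : 0 ≤ Sv := by
    rw [hSvdef]; exact Finset.sum_nonneg fun i _ => sq_nonneg _
  have hSGu0 : 0 ≤ SGu := by
    rw [hSGudef]
    refine Finset.sum_nonneg fun i _ => ?_
    rw [qf_add_mat, qf_smul_mat, qf_one, hMdec i]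
    have h1 := qf_nonneg_of_psd (hP i) (x i - xstar i)
    have h2 : 0 ≤ ρ * ‖mv (A i) (x i - xstar i)‖ ^ 2 := by positivity
    nlinarith [sq_nonneg ‖x i - xstar i‖]
  have hCr : 0 ≤ (ρ * (2 - γ - (∑ i, ξ i)) / 2) * ‖rp‖ ^ 2 := by
    have h1 : 0 ≤ 2 - γ - (∑ i, ξ i) := by linarith
    positivity
  have hV : 4 * (s * L) * Sv ≤ α * Sv + 2 * (L * s) * Sv := by
    have h1 : (4 * (s * L)) * Sv ≤ (α + 2 * (L * s)) * Sv :=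
      mul_le_mul_of_nonneg_right (by linarith only [hsLα]) hSv0
    linarith only [h1]
  have key : (1 / (2 * γ * ρ)) * ‖lamp - lamstar‖ ^ 2 + (1/2) * SGv
      ≤ ((1 / (2 * γ * ρ)) * ‖lam - lamstar‖ ^ 2 - s * cA ^ 2 * ‖lam - lamstar‖ ^ 2)
        + μs * ((1/2) * SGu) := by
    linarith only [hIa, hII, hIII, hIV, hGv, hCr, hV]
  -- conclude
  have hm1 : 1 - 2 * γ * ρ * s * cA ^ 2 ≤ max (1 - 2 * γ * ρ * s * cA ^ 2) μs := le_max_left _ _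
  have hm2 : μs ≤ max (1 - 2 * γ * ρ * s * cA ^ 2) μs := le_max_right _ _
  have hq : 0 ≤ (1 / (2 * γ * ρ)) * ‖lam - lamstar‖ ^ 2 := by positivity
  have hq2 : 0 ≤ (1/2) * SGu := by linarith
  have t1 := mul_le_mul_of_nonneg_right hm1 hq
  have t2 := mul_le_mul_of_nonneg_right hm2 hq2
  have e1 : (1 - 2 * γ * ρ * s * cA ^ 2) * ((1 / (2 * γ * ρ)) * ‖lam - lamstar‖ ^ 2)
      = (1 / (2 * γ * ρ)) * ‖lam - lamstar‖ ^ 2 - s * cA ^ 2 * ‖lam - lamstar‖ ^ 2 := by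
    field_simp
  rw [e1] at t1
  have expand : max (1 - 2 * γ * ρ * s * cA ^ 2) μs *
      ((1 / (2 * γ * ρ)) * ‖lam - lamstar‖ ^ 2 + (1 / 2) * SGu)
      = max (1 - 2 * γ * ρ * s * cA ^ 2) μs * ((1 / (2 * γ * ρ)) * ‖lam - lamstar‖ ^ 2)
        + max (1 - 2 * γ * ρ * s * cA ^ 2) μs * ((1/2) * SGu) := by ring
  rw [expand]
  linarith only [key, t1, t2]
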